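/- Let n ≥ 2 be an integer, let A > 0 and ε > 0, and set ρ_* = A/√ε and W₀(ρ) = ((n−1)/2)·(1 + 2(n−1)/ρ²). There exist B > 1 and t_* ∈ (0, 1/e) such that for every γ ∈ [0, 1/2], the function v⁻(r,t) = (1/(−log t))·[ (1−γ)·W₀(r/√t) − B²/((−log t)·(r/√t)⁴) ] satisfies ∂_t v⁻(r,t) ≤ F[v⁻(·,t)](r) for all (r,t) with (B/√ε)·√(t/(−log t)) ≤ r ≤ 3ρ_*·√t and 0 < t < t_*. -/

import Mathlib

open Real Set Filter

/-- The quasilinear operator `F[v](r) = v v'' - (1/2)(v')² + ((n-1-v)/r) v' + (2(n-1)/r²) v (1-v)`. -/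
noncomputable def Fop (n : ℕ) (v : ℝ → ℝ) (r : ℝ) : ℝ :=
  v r * deriv (deriv v) r - (1/2) * (deriv v r)^2
    + (((n : ℝ) - 1 - v r) / r) * deriv v r
    + (2 * ((n : ℝ) - 1) / r^2) * v r * (1 - v r)

/-- `W₀(ρ) = ((n-1)/2)(1 + 2(n-1)/ρ²)`. -/
noncomputable def W0 (n : ℕ) (ρ : ℝ) : ℝ :=
  (((n:ℝ) - 1) / 2) * (1 + 2 * ((n:ℝ) - 1) / ρ^2)

/-- The parabolic-region subsolution
`v⁻(r,t) = (1/(-log t))·[(1-γ)W₀(r/√t) - B²/((-log t)(r/√t)⁴)]`. -/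
noncomputable def vParSub (n : ℕ) (γ B : ℝ) (r t : ℝ) : ℝ :=
  (1 / (-Real.log t)) *
    ((1 - γ) * W0 n (r / Real.sqrt t) - B^2 / ((-Real.log t) * (r / Real.sqrt t)^4))




set_option maxHeartbeats 1000000 in
lemma key (a m K x l ε x₀ y : ℝ) (ha0 : 0 ≤ a) (ha : 2*a ≤ m) (hm : 1 ≤ m)
    (hx0 : 0 < x₀) (hy0 : 0 < y) (hy : x₀*y = 1) (hx : x₀ ≤ x) (hl : 0 < l)
    (hε : 0 < ε) (hKxl : K*x*l ≤ ε)
    (hK : m*y^2/2 + m^2*y + m^3*y/2 + 2*m^4 + 2*m*(m+6)*ε + 2*m^5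
            + 4*m^2*(m+6)*ε + 2*(m+8)*ε^2 ≤ 2*K) :
    0 ≤ -a - (2*a*m)*x - 2*a^2*m*x + (2*K + 8*a*(2*a*m) - 4*a*(2*a*m)*m)*x^2 + 2*K*l*x^2
       + (2*K*m + 6*(2*a*m)^2 - 2*(2*a*m)^2*m)*x^3 + (4*a*K*m - 24*a*K)*l*x^3
       + (4*(2*a*m)*K*m - 24*(2*a*m)*K)*l*x^4 + (16*K^2 - 2*K^2*m)*l^2*x^5 := by
  have hm0 : (0:ℝ) < m := lt_of_lt_of_le one_pos hm
  have hxpos : 0 < x := lt_of_lt_of_le hx0 hx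
  have hxy : 1 ≤ x*y := by
    calc (1:ℝ) = x₀*y := hy.symm
    _ ≤ x*y := by nlinarith
  have hxy2 : 1 ≤ (x*y)^2 := by nlinarith [hxy]
  have t1 : (0:ℝ) < m*y^2/2 := by positivity
  have t2 : (0:ℝ) ≤ m^2*y := by positivity
  have t3 : (0:ℝ) ≤ m^3*y/2 := by positivity
  have t4 : (0:ℝ) ≤ 2*m^4 := by positivity
  have t5 : (0:ℝ) ≤ 2*m*(m+6)*ε := by positivity
  have t6 : (0:ℝ) ≤ 2*m^5 := by positivity
  have t7 : (0:ℝ) ≤ 4*m^2*(m+6)*ε := by positivity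
  have t8 : (0:ℝ) ≤ 2*(m+8)*ε^2 := by positivity
  have hK0 : 0 < K := by linarith
  have hKxl0 : 0 ≤ K*x*l := by positivity
  have hx2 : (0:ℝ) ≤ x^2 := sq_nonneg x
  have hx3 : (0:ℝ) ≤ x^3 := by positivity
  have ham : (0:ℝ) ≤ 2*a*m := by positivity
  have ham2 : (0:ℝ) ≤ 2*a^2*m := by positivity
  -- piece bounds
  have h1 : a ≤ a*y^2*x^2 := by
    linarith [mul_nonneg ha0 (sub_nonneg.2 hxy2)]
  have h2 : (2*a*m)*x ≤ (2*a*m)*y*x^2 := by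
    linarith [mul_nonneg (mul_nonneg ham hxpos.le) (sub_nonneg.2 hxy)]
  have h3 : 2*a^2*m*x ≤ (2*a^2*m)*y*x^2 := by
    linarith [mul_nonneg (mul_nonneg ham2 hxpos.le) (sub_nonneg.2 hxy)]
  have hq1 : 0 ≤ (m-6)*(K*x*l) + (m+6)*ε := by
    linarith [mul_nonneg hm0.le hKxl0, mul_nonneg hm0.le hε.le]
  have h5 : -(4*a*(m+6)*ε)*x^2 ≤ (4*a*K*m - 24*a*K)*l*x^3 := by
    have e : (4*a*K*m - 24*a*K)*l*x^3 = 4*a*(m-6)*(K*x*l)*x^2 := by ring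
    rw [e]
    linarith [mul_nonneg (mul_nonneg ha0 hx2) hq1]
  have h6 : -(4*(2*a*m)*(m+6)*ε)*x^3 ≤ (4*(2*a*m)*K*m - 24*(2*a*m)*K)*l*x^4 := by
    have e : (4*(2*a*m)*K*m - 24*(2*a*m)*K)*l*x^4 = 4*(2*a*m)*(m-6)*(K*x*l)*x^3 := by ring
    rw [e]
    linarith [mul_nonneg (mul_nonneg ham hx3) hq1]
  have h7 : -(2*(m+8)*ε^2)*x^3 ≤ (16*K^2 - 2*K^2*m)*l^2*x^5 := by
    have e : (16*K^2 - 2*K^2*m)*l^2*x^5 = ((16-2*m)*(K*x*l)^2 + 2*(m+8)*ε^2)*x^3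
        - (2*(m+8)*ε^2)*x^3 := by ring
    rw [e]
    have hsq : (K*x*l)^2 ≤ ε^2 := by
      have h := mul_le_mul hKxl hKxl hKxl0 hε.le
      nlinarith [h]
    have hq2 : 0 ≤ (16-2*m)*(K*x*l)^2 + 2*(m+8)*ε^2 := by
      linarith [mul_nonneg hm0.le (sub_nonneg.2 hsq), sq_nonneg (K*x*l), sq_nonneg ε]
    linarith [mul_nonneg hq2 hx3]
  -- dominant comparisons
  have h4a : 4*a^2 ≤ m^2 := by
    linarith [mul_le_mul ha ha (by linarith : (0:ℝ) ≤ 2*a) hm0.le]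
  have i1 : a*y^2 ≤ m*y^2/2 := by
    linarith [mul_le_mul_of_nonneg_right ha (sq_nonneg y)]
  have i2 : (2*a*m)*y ≤ m^2*y := by
    linarith [mul_le_mul_of_nonneg_right ha (mul_nonneg hm0.le hy0.le)]
  have i3 : (2*a^2*m)*y ≤ m^3*y/2 := by
    linarith [mul_le_mul_of_nonneg_right h4a (mul_nonneg hm0.le hy0.le)]
  have i4 : 8*a^2*m^2 ≤ 2*m^4 := by
    linarith [mul_le_mul_of_nonneg_right h4a (sq_nonneg m)]
  have i5 : 4*a*(m+6)*ε ≤ 2*m*(m+6)*ε := by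
    linarith [mul_le_mul_of_nonneg_right ha (by positivity : (0:ℝ) ≤ (m+6)*ε)]
  have c1 : a*y^2 + (2*a*m)*y + (2*a^2*m)*y + 8*a^2*m^2 + 4*a*(m+6)*ε ≤ 2*K := by
    linarith
  have j1 : 8*a^2*m^3 ≤ 2*m^5 := by
    linarith [mul_le_mul_of_nonneg_right h4a (by positivity : (0:ℝ) ≤ m^3)]
  have j2 : 8*a*m*(m+6)*ε ≤ 4*m^2*(m+6)*ε := by
    linarith [mul_le_mul_of_nonneg_right ha (by positivity : (0:ℝ) ≤ 4*m*(m+6)*ε)]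
  have jK : 2*K ≤ 2*K*m := by
    linarith [mul_le_mul_of_nonneg_left hm (by linarith : (0:ℝ) ≤ 2*K)]
  have c2 : 8*a^2*m^3 + 8*a*m*(m+6)*ε + 2*(m+8)*ε^2 ≤ 2*K*m := by linarith
  have c1x := mul_le_mul_of_nonneg_right c1 hx2
  have c2x := mul_le_mul_of_nonneg_right c2 hx3
  have s1 : (0:ℝ) ≤ 16*a^2*m*x^2 := by positivity
  have s2 : (0:ℝ) ≤ 2*K*l*x^2 := by positivity
  have s3 : (0:ℝ) ≤ 24*a^2*m^2*x^3 := by positivity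
  linarith [c1x, c2x, s1, s2, s3, h1, h2, h3, h5, h6, h7]

noncomputable def vM (c m K r t : ℝ) : ℝ :=
  (c*(m/2) + c*m^2*t/r^2)/(-Real.log t) - K*t^2/((Real.log t)^2*r^4)

lemma vParSub_eq (n : ℕ) (γ B r t : ℝ) (ht : 0 < t) (hlt : Real.log t ≠ 0) (hr : r ≠ 0) :
    vParSub n γ B r t = vM (1-γ) ((n:ℝ)-1) (B^2) r t := by
  have hs0 : Real.sqrt t ≠ 0 := by positivity
  have hs2 : (Real.sqrt t)^2 = t := Real.sq_sqrt ht.le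
  unfold vParSub W0 vM
  have h4 : (r / Real.sqrt t)^4 = r^4 / t^2 := by
    rw [div_pow]
    congr 1
    rw [show (4:ℕ) = 2*2 by rfl, pow_mul, hs2]
  have h2 : (r / Real.sqrt t)^2 = r^2 / t := by rw [div_pow, hs2]
  rw [h4, h2]
  have ht0 : t ≠ 0 := ht.ne'
  field_simp
  ring

lemma vM_hasDerivAt_t (c m K r t : ℝ) (hr : r ≠ 0) (ht : 0 < t) (hlt : Real.log t ≠ 0) :
    HasDerivAt (fun s => vM c m K r s)
      (c*m^2/(r^2*(-Real.log t)) + (c*(m/2) + c*m^2*t/r^2)/(t*(Real.log t)^2)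
        - 2*K*t/(r^4*(Real.log t)^2) + 2*K*t/(r^4*(Real.log t)^3)) t := by
  have hL : HasDerivAt (fun s : ℝ => -Real.log s) (-t⁻¹) t := (Real.hasDerivAt_log ht.ne').neg
  have hLne : -Real.log t ≠ 0 := neg_ne_zero.2 hlt
  have hN : HasDerivAt (fun s : ℝ => c*(m/2) + c*m^2*s/r^2) (c*m^2/r^2) t := by
    have : HasDerivAt (fun s : ℝ => c*m^2*s/r^2) (c*m^2/r^2) t := by
      simpa using (((hasDerivAt_id t).const_mul (c*m^2)).div_const (r^2))
    simpa using this.const_add (c*(m/2))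
  have hpart1 := hN.div hL hLne
  have hnum : HasDerivAt (fun s : ℝ => K*s^2) (K*(2*t)) t := by
    simpa using ((hasDerivAt_pow 2 t).const_mul K)
  have hden : HasDerivAt (fun s : ℝ => (Real.log s)^2*r^4)
      ((2*(Real.log t)*t⁻¹)*r^4) t := by
    have := ((Real.hasDerivAt_log ht.ne').pow 2).mul_const (r^4)
    simpa using this
  have hdenne : (Real.log t)^2*r^4 ≠ 0 := by
    exact mul_ne_zero (pow_ne_zero 2 hlt) (pow_ne_zero 4 hr)
  have hpart2 := hnum.div hden hdenne
  have h := hpart1.sub hpart2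
  refine h.congr_deriv ?_
  field_simp
  ring

lemma vM_hasDerivAt_r (c m K t : ℝ) (ht : 0 < t) (hlt : Real.log t ≠ 0)
    (ρ : ℝ) (hρ : ρ ≠ 0) :
    HasDerivAt (fun z => vM c m K z t)
      (-2*c*m^2*t/(ρ^3*(-Real.log t)) + 4*K*t^2/((Real.log t)^2*ρ^5)) ρ := by
  have hLne : -Real.log t ≠ 0 := neg_ne_zero.2 hlt
  have hden1 : HasDerivAt (fun z : ℝ => z^2) (2*ρ) ρ := by simpa using hasDerivAt_pow 2 ρ
  have h1 : HasDerivAt (fun z : ℝ => c*(m/2) + c*m^2*t/z^2)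
      (-(c*m^2*t*(2*ρ))/(ρ^2)^2) ρ := by
    have := (hasDerivAt_const ρ (c*m^2*t)).div hden1 (pow_ne_zero 2 hρ)
    simpa using this.const_add (c*(m/2))
  have hp1 := h1.div_const (-Real.log t)
  have hden2 : HasDerivAt (fun z : ℝ => (Real.log t)^2*z^4)
      ((Real.log t)^2*(4*ρ^3)) ρ := by
    simpa [mul_comm] using (hasDerivAt_pow 4 ρ).const_mul ((Real.log t)^2)
  have hdenne : (Real.log t)^2*ρ^4 ≠ 0 := mul_ne_zero (pow_ne_zero 2 hlt) (pow_ne_zero 4 hρ)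
  have hp2 := (hasDerivAt_const ρ (K*t^2)).div hden2 hdenne
  have h := hp1.sub hp2
  refine h.congr_deriv ?_
  field_simp
  ring

lemma vM_hasDerivAt_rr (c m K t : ℝ) (ht : 0 < t) (hlt : Real.log t ≠ 0)
    (ρ : ℝ) (hρ : ρ ≠ 0) :
    HasDerivAt (fun z => -2*c*m^2*t/(z^3*(-Real.log t)) + 4*K*t^2/((Real.log t)^2*z^5))
      (6*c*m^2*t/(ρ^4*(-Real.log t)) - 20*K*t^2/((Real.log t)^2*ρ^6)) ρ := by
  have hLne : -Real.log t ≠ 0 := neg_ne_zero.2 hlt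
  have hden1 : HasDerivAt (fun z : ℝ => z^3*(-Real.log t)) ((3*ρ^2)*(-Real.log t)) ρ := by
    simpa using (hasDerivAt_pow 3 ρ).mul_const (-Real.log t)
  have hdenne1 : ρ^3*(-Real.log t) ≠ 0 := mul_ne_zero (pow_ne_zero 3 hρ) hLne
  have hp1 := (hasDerivAt_const ρ (-2*c*m^2*t)).div hden1 hdenne1
  have hden2 : HasDerivAt (fun z : ℝ => (Real.log t)^2*z^5)
      ((Real.log t)^2*(5*ρ^4)) ρ := by
    simpa [mul_comm] using (hasDerivAt_pow 5 ρ).const_mul ((Real.log t)^2)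
  have hdenne2 : (Real.log t)^2*ρ^5 ≠ 0 := mul_ne_zero (pow_ne_zero 2 hlt) (pow_ne_zero 5 hρ)
  have hp2 := (hasDerivAt_const ρ (4*K*t^2)).div hden2 hdenne2
  have h := hp1.add hp2
  refine h.congr_deriv ?_
  field_simp
  ring

lemma log_ne_of_mem (s : ℝ) (hs : s ∈ Ioo (0:ℝ) (Real.exp (-1))) : Real.log s ≠ 0 := by
  have h1 : Real.log s < Real.log (Real.exp (-1)) := Real.log_lt_log hs.1 hs.2
  rw [Real.log_exp] at h1
  linarith

lemma vParSub_eventuallyEq_t (n : ℕ) (γ B r t : ℝ) (hr : r ≠ 0)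
    (ht : t ∈ Ioo (0:ℝ) (Real.exp (-1))) :
    (fun s => vParSub n γ B r s) =ᶠ[nhds t] (fun s => vM (1-γ) ((n:ℝ)-1) (B^2) r s) := by
  filter_upwards [isOpen_Ioo.mem_nhds ht] with s hs
  exact vParSub_eq n γ B r s hs.1 (log_ne_of_mem s hs) hr

lemma deriv_vParSub_t (n : ℕ) (γ B r t : ℝ) (hr : r ≠ 0)
    (ht : t ∈ Ioo (0:ℝ) (Real.exp (-1))) :
    deriv (fun s => vParSub n γ B r s) t
      = (1-γ)*((n:ℝ)-1)^2/(r^2*(-Real.log t))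
        + ((1-γ)*(((n:ℝ)-1)/2) + (1-γ)*((n:ℝ)-1)^2*t/r^2)/(t*(Real.log t)^2)
        - 2*B^2*t/(r^4*(Real.log t)^2) + 2*B^2*t/(r^4*(Real.log t)^3) := by
  rw [(vParSub_eventuallyEq_t n γ B r t hr ht).deriv_eq]
  exact (vM_hasDerivAt_t (1-γ) ((n:ℝ)-1) (B^2) r t hr ht.1 (log_ne_of_mem t ht)).deriv

lemma vParSub_eventuallyEq_r (n : ℕ) (γ B t : ℝ) (ht : t ∈ Ioo (0:ℝ) (Real.exp (-1)))
    (ρ : ℝ) (hρ : ρ ≠ 0) :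
    (fun z => vParSub n γ B z t) =ᶠ[nhds ρ] (fun z => vM (1-γ) ((n:ℝ)-1) (B^2) z t) := by
  filter_upwards [isOpen_compl_singleton.mem_nhds hρ] with z hz
  exact vParSub_eq n γ B z t ht.1 (log_ne_of_mem t ht) hz

lemma deriv_vParSub_r (n : ℕ) (γ B t : ℝ) (ht : t ∈ Ioo (0:ℝ) (Real.exp (-1)))
    (ρ : ℝ) (hρ : ρ ≠ 0) :
    deriv (fun z => vParSub n γ B z t) ρ
      = -2*(1-γ)*((n:ℝ)-1)^2*t/(ρ^3*(-Real.log t)) + 4*B^2*t^2/((Real.log t)^2*ρ^5) := by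
  rw [(vParSub_eventuallyEq_r n γ B t ht ρ hρ).deriv_eq]
  exact (vM_hasDerivAt_r (1-γ) ((n:ℝ)-1) (B^2) t ht.1 (log_ne_of_mem t ht) ρ hρ).deriv

lemma deriv2_vParSub_r (n : ℕ) (γ B t : ℝ) (ht : t ∈ Ioo (0:ℝ) (Real.exp (-1)))
    (r : ℝ) (hr : r ≠ 0) :
    deriv (deriv (fun z => vParSub n γ B z t)) r
      = 6*(1-γ)*((n:ℝ)-1)^2*t/(r^4*(-Real.log t)) - 20*B^2*t^2/((Real.log t)^2*r^6) := by
  have hev : deriv (fun z => vParSub n γ B z t)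
      =ᶠ[nhds r] (fun ρ => -2*(1-γ)*((n:ℝ)-1)^2*t/(ρ^3*(-Real.log t))
        + 4*B^2*t^2/((Real.log t)^2*ρ^5)) := by
    filter_upwards [isOpen_compl_singleton.mem_nhds hr] with ρ hρ
    exact deriv_vParSub_r n γ B t ht ρ hρ
  rw [hev.deriv_eq]
  exact (vM_hasDerivAt_rr (1-γ) ((n:ℝ)-1) (B^2) t ht.1 (log_ne_of_mem t ht) r hr).deriv

set_option maxHeartbeats 2000000

/-- Parabolic-region subsolution: for suitable `B > 1` and `t_* ∈ (0, 1/e)`, `v⁻` is a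
subsolution of `v_t = F[v]` on `(B/√ε)√(t/(-log t)) ≤ r ≤ 3ρ_*√t`, `0 < t < t_*`,
for every `γ ∈ [0, 1/2]`. -/
theorem stmt4 (n : ℕ) (hn : 2 ≤ n) (A ε : ℝ) (hA : 0 < A) (hε : 0 < ε) :
    ∃ B > (1:ℝ), ∃ tstar ∈ Ioo (0:ℝ) (Real.exp (-1)),
      ∀ γ ∈ Icc (0:ℝ) (1/2),
        ∀ r t : ℝ,
          B / Real.sqrt ε * Real.sqrt (t / (-Real.log t)) ≤ r →
          r ≤ 3 * (A / Real.sqrt ε) * Real.sqrt t →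
          0 < t → t < tstar →
          deriv (fun s => vParSub n γ B r s) t ≤ Fop n (fun ρ => vParSub n γ B ρ t) r := by
  have hA2 : (0:ℝ) < 9*A^2 := by have := pow_pos hA 2; linarith
  have hm1 : (1:ℝ) ≤ (n:ℝ) - 1 := by
    have : (2:ℝ) ≤ (n:ℝ) := by exact_mod_cast hn
    linarith
  obtain ⟨m, hmdef⟩ : ∃ m : ℝ, m = (n:ℝ) - 1 := ⟨_, rfl⟩
  have hm1' : (1:ℝ) ≤ m := by rw [hmdef]; exact hm1
  have hm0 : (0:ℝ) < m := lt_of_lt_of_le one_pos hm1'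
  obtain ⟨y, hydef⟩ : ∃ y : ℝ, y = 9*A^2/ε := ⟨_, rfl⟩
  have hy0 : (0:ℝ) < y := by rw [hydef]; exact div_pos hA2 hε
  obtain ⟨D, hDdef⟩ : ∃ D : ℝ, D = m*y^2/2 + m^2*y + m^3*y/2 + 2*m^4 + 2*m*(m+6)*ε + 2*m^5
      + 4*m^2*(m+6)*ε + 2*(m+8)*ε^2 := ⟨_, rfl⟩
  have d1 : 0 < m*y^2/2 := by
    have := mul_pos hm0 (pow_pos hy0 2); linarith
  have d2 : (0:ℝ) ≤ m^2*y := mul_nonneg (sq_nonneg m) hy0.le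
  have d3 : (0:ℝ) ≤ m^3*y/2 :=
    div_nonneg (mul_nonneg (pow_nonneg hm0.le 3) hy0.le) (by norm_num)
  have d4 : (0:ℝ) ≤ 2*m^4 := by positivity
  have d5 : (0:ℝ) ≤ 2*m*(m+6)*ε :=
    mul_nonneg (mul_nonneg (by linarith) (by linarith)) hε.le
  have d6 : (0:ℝ) ≤ 2*m^5 := by
    have := pow_nonneg hm0.le 5; linarith
  have d7 : (0:ℝ) ≤ 4*m^2*(m+6)*ε :=
    mul_nonneg (mul_nonneg (by positivity) (by linarith)) hε.le
  have d8 : (0:ℝ) ≤ 2*(m+8)*ε^2 := mul_nonneg (by linarith) (sq_nonneg ε)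
  have hD0 : 0 < D := by rw [hDdef]; linarith
  refine ⟨Real.sqrt (1+D), ?_, Real.exp (-2), ⟨Real.exp_pos _, Real.exp_lt_exp.2 (by norm_num)⟩, ?_⟩
  · exact (Real.lt_sqrt (by linarith)).2 (by nlinarith)
  set B : ℝ := Real.sqrt (1+D) with hBdef
  have hK2 : B^2 = 1 + D := by rw [hBdef]; exact Real.sq_sqrt (by linarith)
  have hB0 : 0 < B := by rw [hBdef]; exact Real.sqrt_pos.2 (by linarith)
  clear_value B
  intro γ hγ r t hlow hupp ht htstar
  -- basic facts about t
  have htIoo : t ∈ Ioo (0:ℝ) (Real.exp (-1)) :=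
    ⟨ht, htstar.trans (Real.exp_lt_exp.2 (by norm_num))⟩
  have hlogt : Real.log t < -2 := by
    have := Real.log_lt_log ht htstar
    rwa [Real.log_exp] at this
  have hlogne : Real.log t ≠ 0 := ne_of_lt (by linarith)
  obtain ⟨L, hLdef⟩ : ∃ L : ℝ, L = -Real.log t := ⟨_, rfl⟩
  have hL0 : (0:ℝ) < L := by rw [hLdef]; linarith
  have hlogL : Real.log t = -L := by rw [hLdef]; ring
  have hlow' : B / Real.sqrt ε * Real.sqrt (t / L) ≤ r := by rw [hLdef]; exact hlow
  -- positivity of r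
  have hsqtL : 0 < Real.sqrt (t / L) := Real.sqrt_pos.2 (div_pos ht hL0)
  have hlowpos : 0 < B / Real.sqrt ε * Real.sqrt (t / L) :=
    mul_pos (div_pos hB0 (Real.sqrt_pos.2 hε)) hsqtL
  have hr0 : 0 < r := lt_of_lt_of_le hlowpos hlow'
  have hr2 : (0:ℝ) < r^2 := pow_pos hr0 2
  -- squared bounds
  have hsε : (Real.sqrt ε)^2 = ε := Real.sq_sqrt hε.le
  have hr2low : B^2/ε * (t/L) ≤ r^2 := by
    have h1 : (B / Real.sqrt ε * Real.sqrt (t / L))^2 ≤ r^2 :=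
      pow_le_pow_left₀ hlowpos.le hlow' 2
    calc B^2/ε * (t/L) = (B / Real.sqrt ε * Real.sqrt (t / L))^2 := by
          rw [mul_pow, div_pow, hsε, Real.sq_sqrt (div_pos ht hL0).le]
      _ ≤ r^2 := h1
  have hr2upp : r^2 ≤ 9*A^2/ε * t := by
    have h1 : r^2 ≤ (3 * (A / Real.sqrt ε) * Real.sqrt t)^2 :=
      pow_le_pow_left₀ hr0.le hupp 2
    calc r^2 ≤ (3 * (A / Real.sqrt ε) * Real.sqrt t)^2 := h1
      _ = 9*A^2/ε * t := by
          rw [mul_pow, mul_pow, div_pow, hsε, Real.sq_sqrt ht.le]; ring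
  -- constraints for the key lemma
  have hx : ε/(9*A^2) ≤ t/r^2 := by
    rw [div_le_div_iff₀ hA2 hr2]
    have h2 : ε * r^2 ≤ ε * (9*A^2/ε * t) := mul_le_mul_of_nonneg_left hr2upp hε.le
    have h3 : ε * (9*A^2/ε * t) = t * (9*A^2) := by field_simp
    linarith
  have hKxl : B^2*(t/r^2)*(1/L) ≤ ε := by
    rw [show B^2*(t/r^2)*(1/L) = B^2*t/(r^2*L) by ring,
      div_le_iff₀ (mul_pos hr2 hL0)]
    have h2 : B^2/ε * (t/L) * (ε*L) ≤ r^2 * (ε*L) :=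
      mul_le_mul_of_nonneg_right hr2low (mul_pos hε hL0).le
    have h3 : B^2/ε * (t/L) * (ε*L) = B^2*t := by field_simp
    linarith
  have hγ0 : (0:ℝ) ≤ 1 - γ := by have := hγ.2; linarith
  -- key inequality, instantiated
  have hkey := key ((1-γ)*m/2) m (B^2) (t/r^2) (1/L) ε (ε/(9*A^2)) y
    (by linarith [mul_nonneg hγ0 hm0.le])
    (by nlinarith [mul_nonneg hγ.1 hm0.le]) hm1'
    (div_pos hε hA2) hy0
    (by rw [hydef]; field_simp) hx (one_div_pos.2 hL0) hε hKxl
    (by rw [hK2, hDdef]; linarith)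
  rw [hmdef] at hkey
  -- rewrite the goal explicitly
  rw [deriv_vParSub_t n γ B r t hr0.ne' htIoo]
  rw [Fop]
  rw [deriv2_vParSub_r n γ B t htIoo r hr0.ne']
  rw [deriv_vParSub_r n γ B t htIoo r hr0.ne']
  rw [vParSub_eq n γ B r t ht hlogne hr0.ne']
  rw [← sub_nonneg]
  have hfac : (0:ℝ) ≤ 1/(t*L^2) := (one_div_pos.2 (mul_pos ht (pow_pos hL0 2))).le
  have h2 := mul_nonneg hfac hkey
  refine h2.trans_eq ?_
  simp only [vM]
  rw [hlogL]
  have hrne : r ≠ 0 := hr0.ne'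
  have htne : t ≠ 0 := ht.ne'
  have hLne : L ≠ 0 := hL0.ne'
  rw [show (-L:ℝ)^3 = -L^3 from by ring]
  field_simp
  ring
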